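/- arXiv:1301.6312 — 2 statements merged into one kernel-verified Lean document; each statement's English description precedes it below -/
import Mathlib

section
/- If ω is a node in a tree G_n on n nodes such that |T_u^ω| ≤ n/2 for every neighbor u of ω in a subset N_l(ω) of its neighbors, then R(ω, G_n) ≥ R(u, G_n) for all u ∈ N_l(ω). -/
/-- `subtreeSet G u v` is the subtree `T_u^v` rooted at `u` when the tree is rooted at `v`. -/
def subtreeSet {V : Type*} (G : SimpleGraph V) (u v : V) : Set V :=
  {w | ∀ p : G.Walk v w, u ∈ p.support}

/-- Rumor centrality `R(s, G_n) = n! · ∏_{u} 1 / |T_u^s|`. -/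
noncomputable def rumorCentrality {V : Type*} [Fintype V] (G : SimpleGraph V) (s : V) : ℚ :=
  (Nat.factorial (Fintype.card V) : ℚ) * ∏ u : V, 1 / ((subtreeSet G u s).ncard : ℚ)

open SimpleGraph

lemma subtreeSet_self {V : Type*} (G : SimpleGraph V) (s : V) :
    subtreeSet G s s = Set.univ := by
  ext w
  simp only [subtreeSet, Set.mem_setOf_eq, Set.mem_univ, iff_true]
  exact fun p => p.start_mem_support

lemma mem_subtreeSet_self {V : Type*} (G : SimpleGraph V) (s w : V) :
    w ∈ subtreeSet G w s := fun p => p.end_mem_support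

/-- For `w ∉ {u, ω}` with `u, ω` adjacent, `T_w^u = T_w^ω`. -/
lemma subtreeSet_eq_of_adj {V : Type*} (G : SimpleGraph V) {u ω w : V}
    (h : G.Adj ω u) (hwu : w ≠ u) (hwω : w ≠ ω) :
    subtreeSet G w u = subtreeSet G w ω := by
  ext x
  simp only [subtreeSet, Set.mem_setOf_eq]
  constructor
  · intro hx p
    have := hx (SimpleGraph.Walk.cons h.symm p)
    simpa [hwu] using this
  · intro hx p
    have := hx (SimpleGraph.Walk.cons h p)
    simpa [hwω] using this

/-- For adjacent `u, ω` in a tree, `T_ω^u = (T_u^ω)ᶜ`. -/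
lemma subtreeSet_compl {V : Type*} (G : SimpleGraph V) (hG : G.IsTree) {u ω : V}
    (h : G.Adj ω u) :
    subtreeSet G ω u = (subtreeSet G u ω)ᶜ := by
  classical
  ext w
  simp only [subtreeSet, Set.mem_compl_iff, Set.mem_setOf_eq]
  constructor
  · intro h1 h2
    obtain ⟨p0⟩ := hG.isConnected.preconnected ω w
    let P := p0.toPath
    have hu : u ∈ P.1.support := h2 P.1
    have hω : ω ∈ (P.1.dropUntil u hu).support := h1 _
    have hnd : P.1.support.Nodup := P.2.support_nodup
    rw [← SimpleGraph.Walk.take_spec P.1 hu, SimpleGraph.Walk.support_append] at hnd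
    have hdisj := List.disjoint_of_nodup_append hnd
    have hω1 : ω ∈ (P.1.takeUntil u hu).support := SimpleGraph.Walk.start_mem_support _
    have hω2 : ω ∈ (P.1.dropUntil u hu).support.tail := by
      have hcons := SimpleGraph.Walk.support_eq_cons (P.1.dropUntil u hu)
      rw [hcons] at hω
      rcases List.mem_cons.1 hω with h' | h'
      · exact absurd h' h.ne
      · exact h'
    exact hdisj hω1 hω2
  · intro h1 p
    by_contra hω
    push_neg at h1
    obtain ⟨q, hq⟩ := h1
    have hωp : ω ∉ p.toPath.1.support := fun hh => hω (p.support_toPath_subset hh)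
    have huq : u ∉ q.toPath.1.support := fun hh => hq (q.support_toPath_subset hh)
    have hpath : (SimpleGraph.Walk.cons h p.toPath.1).IsPath :=
      p.toPath.2.cons hωp
    have := (hG.existsUnique_path ω w).unique hpath q.toPath.2
    apply huq
    rw [← this, SimpleGraph.Walk.support_cons]
    exact List.mem_cons_of_mem _ (SimpleGraph.Walk.start_mem_support _)

/-- If `|T_u^ω| ≤ n/2` for every neighbor `u` of `ω` in a subset `N_l(ω)` of its neighbors,
then `R(ω, G_n) ≥ R(u, G_n)` for all `u ∈ N_l(ω)`. -/
theorem local_rumor_center_of_small_subtrees {V : Type*} [Fintype V]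
    (G : SimpleGraph V) (hG : G.IsTree) (ω : V) (Nl : Finset V)
    (hNl : ∀ u ∈ Nl, G.Adj ω u)
    (hsize : ∀ u ∈ Nl, 2 * (subtreeSet G u ω).ncard ≤ Fintype.card V) :
    ∀ u ∈ Nl, rumorCentrality G u ≤ rumorCentrality G ω := by
  classical
  intro u hu
  have hadj : G.Adj ω u := hNl u hu
  have hne : ω ≠ u := hadj.ne
  set n := Fintype.card V with hn
  set t := (subtreeSet G u ω).ncard with ht
  -- basic size facts
  have htpos : 0 < t := by
    rw [ht, Set.ncard_pos (Set.toFinite _)]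
    exact ⟨u, mem_subtreeSet_self G ω u⟩
  have h2t : 2 * t ≤ n := hsize u hu
  have hcompl : (subtreeSet G ω u).ncard = n - t := by
    have := Set.ncard_add_ncard_compl (subtreeSet G u ω) (Set.toFinite _) (Set.toFinite _)
    rw [subtreeSet_compl G hG hadj]
    rw [Nat.card_eq_fintype_card] at this
    omega
  have htn : t ≤ n - t := by omega
  have hntpos : 0 < n - t := by omega
  -- the product manipulation
  set f : V → V → ℚ := fun s w => 1 / ((subtreeSet G w s).ncard : ℚ) with hf
  have hself : ∀ s : V, f s s = 1 / (n : ℚ) := by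
    intro s
    simp [hf, subtreeSet_self, Set.ncard_univ, hn]
  have hfuω : f u ω = 1 / ((n - t : ℕ) : ℚ) := by simp [hf, hcompl]
  have hfωu : f ω u = 1 / ((t : ℕ) : ℚ) := by simp [hf, ht]
  have hmemu : u ∈ (Finset.univ : Finset V) := Finset.mem_univ u
  have hmemω : ω ∈ (Finset.univ.erase u : Finset V) :=
    Finset.mem_erase.2 ⟨hne, Finset.mem_univ ω⟩
  set S := (Finset.univ.erase u).erase ω with hS
  have hsplit : ∀ s : V, ∏ w : V, f s w = f s u * (f s ω * ∏ w ∈ S, f s w) := by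
    intro s
    rw [← Finset.mul_prod_erase _ _ hmemu, ← Finset.mul_prod_erase _ _ hmemω]
  have hcongr : ∏ w ∈ S, f u w = ∏ w ∈ S, f ω w := by
    apply Finset.prod_congr rfl
    intro w hw
    have hwω : w ≠ ω := (Finset.mem_erase.1 hw).1
    have hwu : w ≠ u := (Finset.mem_erase.1 ((Finset.mem_erase.1 hw).2)).1
    simp only [hf]
    rw [subtreeSet_eq_of_adj G hadj hwu hwω]
  have hP : (0:ℚ) ≤ ∏ w ∈ S, f ω w := by
    apply Finset.prod_nonneg
    intro w _
    positivity
  have hkey : (1 : ℚ) / ((n - t : ℕ) : ℚ) ≤ 1 / ((t : ℕ) : ℚ) := by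
    apply one_div_le_one_div_of_le
    · exact_mod_cast htpos
    · exact_mod_cast htn
  have hprod : ∏ w : V, f u w ≤ ∏ w : V, f ω w := by
    rw [hsplit u, hsplit ω, hself u, hself ω, hfuω, hfωu, hcongr]
    have h1n : (0:ℚ) ≤ 1 / (n : ℚ) := by positivity
    calc (1:ℚ)/(n:ℚ) * (1 / ((n - t : ℕ) : ℚ) * ∏ w ∈ S, f ω w)
        = 1 / ((n - t : ℕ) : ℚ) * (1/(n:ℚ) * ∏ w ∈ S, f ω w) := by ring
      _ ≤ 1 / ((t : ℕ) : ℚ) * (1/(n:ℚ) * ∏ w ∈ S, f ω w) := by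
          apply mul_le_mul_of_nonneg_right hkey
          exact mul_nonneg h1n hP
  unfold rumorCentrality
  apply mul_le_mul_of_nonneg_left hprod
  positivity
end

section
/- In a tree G_n on n nodes, let s* = v_0, v_1, …, v_d be a path with subtree sizes Z_h = |T_{v_h}^{s*}| all positive (so Z_h ≥ Z_{h+1} + 1). For d ≥ 2, if R(v_d, G_n) ≥ R(s*, G_n) then R(v_{d−1}, G_n) > R(s*, G_n). Hence the error event for the suspect at distance d implies the error event for the suspect at distance d − 1, so the error probability is non-increasing in d. -/
open SimpleGraph

section Aux

variable {V : Type*} {G : SimpleGraph V}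

lemma path_unique (hG : G.IsTree) {a b : V} {p q : G.Walk a b}
    (hp : p.IsPath) (hq : q.IsPath) : p = q :=
  (hG.existsUnique_path a b).unique hp hq

lemma exists_path (hG : G.IsTree) (a b : V) : ∃ p : G.Walk a b, p.IsPath :=
  (hG.existsUnique_path a b).exists

lemma mem_subtree_iff (hG : G.IsTree) {u a x : V} {q : G.Walk a x} (hq : q.IsPath) :
    x ∈ subtreeSet G u a ↔ u ∈ q.support := by
  classical
  constructor
  · intro h; exact h q
  · intro h p
    have hbq : p.bypass = q := path_unique hG p.bypass_isPath hq
    have hsub : q.support ⊆ p.support := hbq ▸ p.support_bypass_subset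
    exact hsub h

lemma mem_subtree_self (u a : V) : u ∈ subtreeSet G u a :=
  fun p => p.end_mem_support

lemma subtree_root (r : V) : subtreeSet G r r = Set.univ := by
  ext x
  simp only [Set.mem_univ, iff_true]
  intro p
  exact p.start_mem_support

lemma subtree_decomp (hG : G.IsTree) {a u x : V} (hau : G.Adj a u) {q : G.Walk a x}
    (hq : q.IsPath) (hu : u ∈ q.support) :
    ∃ q' : G.Walk u x, q'.IsPath ∧ q.support = a :: q'.support := by
  classical
  have hspec := q.take_spec hu
  have ht : (q.takeUntil u hu).IsPath := hq.takeUntil hu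
  have hcons : (Walk.cons hau Walk.nil).IsPath := by simp [hau.ne]
  have heq : q.takeUntil u hu = Walk.cons hau Walk.nil := path_unique hG ht hcons
  refine ⟨q.dropUntil u hu, hq.dropUntil hu, ?_⟩
  conv_lhs => rw [← hspec]
  rw [heq]
  rw [Walk.support_append, Walk.support_cons, Walk.support_nil,
    Walk.support_eq_cons (q.dropUntil u hu)]
  simp

lemma subtree_compl (hG : G.IsTree) {a u : V} (hau : G.Adj a u) :
    subtreeSet G a u = (subtreeSet G u a)ᶜ := by
  ext x
  obtain ⟨q, hq⟩ := exists_path hG a x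
  by_cases hu : u ∈ q.support
  · obtain ⟨q', hq', hs⟩ := subtree_decomp hG hau hq hu
    have hxmem : x ∈ subtreeSet G u a := (mem_subtree_iff hG hq).mpr hu
    have hanot : a ∉ q'.support := by
      have hnodup := hq.support_nodup
      rw [hs] at hnodup
      exact (List.nodup_cons.mp hnodup).1
    have : x ∉ subtreeSet G a u := by
      rw [mem_subtree_iff hG hq']
      exact hanot
    simp [this, hxmem]
  · have hxnot : x ∉ subtreeSet G u a := by
      rw [mem_subtree_iff hG hq]; exact hu
    have hcons : (Walk.cons hau.symm q).IsPath := hq.cons hu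
    have : x ∈ subtreeSet G a u := by
      rw [mem_subtree_iff hG hcons, Walk.support_cons]
      exact List.mem_cons_of_mem _ q.start_mem_support
    simp [this, hxnot]

lemma subtree_eq_of_ne (hG : G.IsTree) {a b w : V} (hab : G.Adj a b)
    (hwa : w ≠ a) (hwb : w ≠ b) :
    subtreeSet G w a = subtreeSet G w b := by
  ext x
  obtain ⟨q, hq⟩ := exists_path hG a x
  rw [mem_subtree_iff hG hq]
  by_cases hb : b ∈ q.support
  · obtain ⟨q', hq', hs⟩ := subtree_decomp hG hab hq hb
    rw [mem_subtree_iff hG hq', hs]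
    simp [hwa]
  · have hcons : (Walk.cons hab.symm q).IsPath := hq.cons hb
    rw [mem_subtree_iff hG hcons, Walk.support_cons]
    simp [hwb]

lemma one_le_ncard_subtree [Fintype V] (u a : V) : 1 ≤ (subtreeSet G u a).ncard := by
  have h : (subtreeSet G u a).Nonempty := ⟨u, mem_subtree_self u a⟩
  have := (Set.ncard_pos (Set.toFinite _)).mpr h
  omega

lemma rumor_pos [Fintype V] (G : SimpleGraph V) (s : V) : 0 < rumorCentrality G s := by
  unfold rumorCentrality
  apply mul_pos
  · exact_mod_cast Nat.factorial_pos _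
  · apply Finset.prod_pos
    intro u _
    apply one_div_pos.mpr
    exact_mod_cast one_le_ncard_subtree u s

lemma rumor_rec [Fintype V] (hG : G.IsTree) {a b : V} (hab : G.Adj a b) :
    rumorCentrality G b * ((subtreeSet G a b).ncard : ℚ)
      = rumorCentrality G a * ((subtreeSet G b a).ncard : ℚ) := by
  classical
  have hne : b ≠ a := hab.ne'
  set s : Finset V := (Finset.univ.erase a).erase b with hs
  have hbmem : b ∈ Finset.univ.erase a := Finset.mem_erase.mpr ⟨hne, Finset.mem_univ b⟩
  have key : ∀ f : V → ℚ, ∏ w : V, f w = f a * (f b * ∏ w ∈ s, f w) := by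
    intro f
    rw [← Finset.mul_prod_erase _ f (Finset.mem_univ a), ← Finset.mul_prod_erase _ f hbmem]
  have hsame : ∏ w ∈ s, (1 / ((subtreeSet G w b).ncard : ℚ))
      = ∏ w ∈ s, (1 / ((subtreeSet G w a).ncard : ℚ)) := by
    apply Finset.prod_congr rfl
    intro w hw
    have hwb : w ≠ b := (Finset.mem_erase.mp hw).1
    have hwa : w ≠ a := (Finset.mem_erase.mp (Finset.mem_erase.mp hw).2).1
    rw [subtree_eq_of_ne hG hab hwa hwb]
  have hrootb : (subtreeSet G b b).ncard = Fintype.card V := by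
    rw [subtree_root, Set.ncard_univ, Nat.card_eq_fintype_card]
  have hroota : (subtreeSet G a a).ncard = Fintype.card V := by
    rw [subtree_root, Set.ncard_univ, Nat.card_eq_fintype_card]
  have hZ : ((subtreeSet G b a).ncard : ℚ) ≠ 0 := by
    have := one_le_ncard_subtree (G := G) b a
    positivity
  have hW : ((subtreeSet G a b).ncard : ℚ) ≠ 0 := by
    have := one_le_ncard_subtree (G := G) a b
    positivity
  have hn : ((Fintype.card V : ℚ)) ≠ 0 := by
    have : 0 < Fintype.card V := by
      have := one_le_ncard_subtree (G := G) a a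
      omega
    positivity
  have hP : (∏ x ∈ s, ((subtreeSet G x a).ncard : ℚ)) ≠ 0 := by
    apply Finset.prod_ne_zero_iff.mpr
    intro w _
    have := one_le_ncard_subtree (G := G) w a
    positivity
  unfold rumorCentrality
  rw [key, key, hsame, hrootb, hroota]
  field_simp

lemma subtree_step (hG : G.IsTree) {a b c : V} (hab : G.Adj a b) (hbc : G.Adj b c)
    (hac : a ≠ c) : subtreeSet G c b ⊆ subtreeSet G b a := by
  intro x hx
  by_contra hxb
  have hx' : x ∈ subtreeSet G a b := by
    rw [subtree_compl hG hab]
    exact hxb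
  obtain ⟨q, hq⟩ := exists_path hG b x
  have hc : c ∈ q.support := (mem_subtree_iff hG hq).mp hx
  have ha : a ∈ q.support := (mem_subtree_iff hG hq).mp hx'
  obtain ⟨q1, _, hs1⟩ := subtree_decomp hG hbc hq hc
  obtain ⟨q2, _, hs2⟩ := subtree_decomp hG hab.symm hq ha
  have h12 : q1.support = q2.support := by
    have := hs1.symm.trans hs2
    simpa using this
  rw [Walk.support_eq_cons q1, Walk.support_eq_cons q2] at h12
  exact hac ((List.cons_eq_cons.mp h12).1.symm)

lemma subtree_step_card [Fintype V] (hG : G.IsTree) {a b c : V} (hab : G.Adj a b)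
    (hbc : G.Adj b c) (hac : a ≠ c) :
    (subtreeSet G c b).ncard < (subtreeSet G b a).ncard := by
  apply Set.ncard_lt_ncard _ (Set.toFinite _)
  constructor
  · exact subtree_step hG hab hbc hac
  · intro hsub
    have hb : b ∈ subtreeSet G c b := hsub (mem_subtree_self b a)
    have hnil := hb Walk.nil
    simp only [Walk.support_nil, List.mem_singleton] at hnil
    exact hbc.ne' hnil

end Aux

/-- Along a path `s* = v 0, v 1, …, v d` in a tree (`d ≥ 2`), if `R(v d) ≥ R(s*)`
then `R(v (d−1)) > R(s*)`: the error event at distance `d` implies the error event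
at distance `d − 1`. -/
theorem error_implies_error_closer {V : Type*} [Fintype V]
    (G : SimpleGraph V) (hG : G.IsTree) (d : ℕ) (hd : 2 ≤ d) (v : ℕ → V)
    (hadj : ∀ h < d, G.Adj (v h) (v (h + 1)))
    (hinj : ∀ i ≤ d, ∀ j ≤ d, v i = v j → i = j)
    (hR : rumorCentrality G (v 0) ≤ rumorCentrality G (v d)) :
    rumorCentrality G (v 0) < rumorCentrality G (v (d - 1)) := by
  classical
  set n := Fintype.card V with hn
  set A : ℕ → ℕ := fun h => (subtreeSet G (v (h + 1)) (v h)).ncard with hA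
  set B : ℕ → ℕ := fun h => (subtreeSet G (v h) (v (h + 1))).ncard with hB
  set R : ℕ → ℚ := fun h => rumorCentrality G (v h) with hRdef
  have hRpos : ∀ h, 0 < R h := fun h => rumor_pos G (v h)
  have hABn : ∀ h < d, A h + B h = n := by
    intro h hh
    have hcompl : subtreeSet G (v h) (v (h + 1)) = (subtreeSet G (v (h + 1)) (v h))ᶜ :=
      subtree_compl hG (hadj h hh)
    have := Set.ncard_add_ncard_compl (subtreeSet G (v (h + 1)) (v h)) (Set.toFinite _)
      (Set.toFinite _)
    simp only [hA, hB, hcompl]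
    rw [this, Nat.card_eq_fintype_card]
  have hApos : ∀ h, 1 ≤ A h := fun h => one_le_ncard_subtree _ _
  have hBpos : ∀ h, 1 ≤ B h := fun h => one_le_ncard_subtree _ _
  have hrec : ∀ h < d, R (h + 1) * (B h : ℚ) = R h * (A h : ℚ) :=
    fun h hh => rumor_rec hG (hadj h hh)
  have hdec : ∀ h, h + 2 ≤ d → A (h + 1) < A h := by
    intro h hh
    have hac : v h ≠ v (h + 2) := by
      intro heq
      have := hinj h (by omega) (h + 2) (by omega) heq
      omega
    exact subtree_step_card hG (hadj h (by omega)) (hadj (h + 1) (by omega)) hac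
  -- monotone decrease with gaps
  have hmono : ∀ k i, i + k + 1 ≤ d → A (i + k) + k ≤ A i := by
    intro k
    induction k with
    | zero => intro i _; simp
    | succ k ih =>
      intro i hik
      have h1 := ih (i + 1) (by omega)
      have h2 := hdec i (by omega)
      have heq : i + 1 + k = i + (k + 1) := by omega
      rw [heq] at h1
      omega
  -- key recursion at index d-1
  have hd1 : d - 1 < d := by omega
  have hrecd : R d * (B (d - 1) : ℚ) = R (d - 1) * (A (d - 1) : ℚ) := by
    have := hrec (d - 1) hd1
    have heq : d - 1 + 1 = d := by omega
    rwa [heq] at this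
  by_cases hcase : A (d - 1) < B (d - 1)
  · -- last ratio < 1 : R(d-1) > R(d) ≥ R(0)
    have hABq : (A (d - 1) : ℚ) < (B (d - 1) : ℚ) := by exact_mod_cast hcase
    have h1 : R (d - 1) * (A (d - 1) : ℚ) > R d * (A (d - 1) : ℚ) := by
      rw [← hrecd]
      exact mul_lt_mul_of_pos_left hABq (hRpos d)
    have h2 : R 0 * (A (d - 1) : ℚ) ≤ R d * (A (d - 1) : ℚ) := by
      apply mul_le_mul_of_nonneg_right hR
      positivity
    have h3 : R 0 * (A (d - 1) : ℚ) < R (d - 1) * (A (d - 1) : ℚ) := lt_of_le_of_lt h2 h1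
    have hApq : (0 : ℚ) < (A (d - 1) : ℚ) := by
      have := hApos (d - 1); positivity
    exact lt_of_mul_lt_mul_right h3 (le_of_lt hApq)
  · -- B (d-1) ≤ A (d-1) : all earlier ratios > 1, chain is strictly increasing
    push_neg at hcase
    have hstep : ∀ k, k + 2 ≤ d → R k < R (k + 1) := by
      intro k hk
      have hBA : B k < A k := by
        have hm := hmono (d - 1 - k) k (by omega)
        have hkd : k + (d - 1 - k) = d - 1 := by omega
        rw [hkd] at hm
        have h1 := hABn k (by omega)
        have h2 := hABn (d - 1) hd1
        omega
      have hBAq : (B k : ℚ) < (A k : ℚ) := by exact_mod_cast hBA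
      have h1 : R (k + 1) * (B k : ℚ) > R k * (B k : ℚ) := by
        rw [hrec k (by omega)]
        exact mul_lt_mul_of_pos_left hBAq (hRpos k)
      have hBq : (0 : ℚ) < (B k : ℚ) := by
        have := hBpos k; positivity
      exact lt_of_mul_lt_mul_right h1 (le_of_lt hBq)
    have hchain : ∀ m, 1 ≤ m → m ≤ d - 1 → R 0 < R m := by
      intro m
      induction m with
      | zero => intro h _; omega
      | succ m ih =>
        intro _ hm
        rcases Nat.eq_or_lt_of_le (show 1 ≤ m + 1 from by omega) with h1 | h1
        · have hm0 : m = 0 := by omega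
          subst hm0
          exact hstep 0 (by omega)
        · have hm1 : 1 ≤ m := by omega
          have := ih hm1 (by omega)
          exact lt_trans this (hstep m (by omega))
    exact hchain (d - 1) (by omega) le_rfl
end
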